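/- Let G be a primitive permutation group of finite degree n, and let Γ be a subgroup of G whose non-identity elements move exactly the points of a subset S of size p (i.e., the support of Γ is S), such that Γ acts primitively on S. Then G is (n − p + 1)-transitive on the n points. -/

import Mathlib

/-- `G` acts preprimitively on `α`: the action is pretransitive and every block is trivial. -/
def IsPreprimitive (G : Type*) (α : Type*) [Group G] [MulAction G α] : Prop :=
  MulAction.IsPretransitive G α ∧
    ∀ B : Set α, MulAction.IsBlock G B → MulAction.IsTrivialBlock B

/-- `G` acts `n`-fold pretransitively on `α`: the induced action on embeddings of `Fin n`
into `α` (i.e. on ordered `n`-tuples of distinct elements) is pretransitive. -/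
def IsMultiplyPretransitive (G : Type*) (α : Type*) [Group G] [MulAction G α] (n : ℕ) : Prop :=
  MulAction.IsPretransitive G (Fin n ↪ α)

open Set
set_option linter.unusedSectionVars false

namespace JordanAux

variable {Ω : Type*} [Fintype Ω] [DecidableEq Ω]

/-- The support of a subgroup of permutations. -/
def Supp (H : Subgroup (Equiv.Perm Ω)) : Set Ω := {x : Ω | ∃ γ ∈ H, γ x ≠ x}

/-- Transitivity of a subgroup on a set, concrete form. -/
def TransOn (H : Subgroup (Equiv.Perm Ω)) (S : Set Ω) : Prop :=
  ∀ x ∈ S, ∀ y ∈ S, ∃ γ ∈ H, γ x = y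

/-- Primitivity (trivial quasi-blocks) of a subgroup on a set, concrete form. -/
def PrimOn (H : Subgroup (Equiv.Perm Ω)) (S : Set Ω) : Prop :=
  ∀ B ⊆ S, (∀ γ ∈ H, ⇑γ '' B = B ∨ Disjoint (⇑γ '' B) B) → B.Subsingleton ∨ B = S

lemma fix_of_not_mem_supp {H : Subgroup (Equiv.Perm Ω)} {γ : Equiv.Perm Ω} (hγ : γ ∈ H)
    {x : Ω} (hx : x ∉ Supp H) : γ x = x := by
  by_contra h
  exact hx ⟨γ, hγ, h⟩

lemma mem_supp_of_move {H : Subgroup (Equiv.Perm Ω)} {γ : Equiv.Perm Ω} (hγ : γ ∈ H)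
    {x : Ω} (hx : γ x ≠ x) : x ∈ Supp H := ⟨γ, hγ, hx⟩

/-- a support never has exactly one point near a given one. -/
lemma supp_second {H : Subgroup (Equiv.Perm Ω)} {x : Ω} (hx : x ∈ Supp H) :
    ∃ y ∈ Supp H, y ≠ x := by
  obtain ⟨γ, hγ, hmove⟩ := hx
  exact ⟨γ x, ⟨γ⁻¹, inv_mem hγ, by simpa using Ne.symm hmove⟩, hmove⟩

lemma apply_mem_supp {H : Subgroup (Equiv.Perm Ω)} {γ : Equiv.Perm Ω} (hγ : γ ∈ H)
    {x : Ω} (hx : x ∈ Supp H) : γ x ∈ Supp H := by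
  by_contra h
  have h1 : γ⁻¹ (γ x) = γ x := fix_of_not_mem_supp (inv_mem hγ) h
  simp only [← Equiv.Perm.mul_apply, inv_mul_cancel, Equiv.Perm.one_apply] at h1
  rw [← h1] at h
  exact h hx

lemma image_supp {H : Subgroup (Equiv.Perm Ω)} {γ : Equiv.Perm Ω} (hγ : γ ∈ H) :
    ⇑γ '' Supp H = Supp H := by
  apply Set.eq_of_subset_of_ncard_le
  · rintro y ⟨x, hx, rfl⟩
    exact apply_mem_supp hγ hx
  · simp [Set.ncard_image_of_injective _ γ.injective]
  · exact Set.toFinite _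

lemma image_perm_inv (σ : Equiv.Perm Ω) (B : Set Ω) : ⇑σ⁻¹ '' (⇑σ '' B) = B := by
  rw [← Set.image_comp]
  convert Set.image_id B
  simp

lemma image_perm_inv' (σ : Equiv.Perm Ω) (B : Set Ω) : ⇑σ '' (⇑σ⁻¹ '' B) = B := by
  simpa using image_perm_inv σ⁻¹ B

/-- The conjugate subgroup `σ H σ⁻¹`. -/
def conjSub (σ : Equiv.Perm Ω) (H : Subgroup (Equiv.Perm Ω)) : Subgroup (Equiv.Perm Ω) where
  carrier := {γ | σ⁻¹ * γ * σ ∈ H}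
  one_mem' := by simpa using H.one_mem
  mul_mem' := fun {a b} ha hb => by
    have ha' : σ⁻¹ * a * σ ∈ H := ha
    have hb' : σ⁻¹ * b * σ ∈ H := hb
    have h : σ⁻¹ * (a * b) * σ = (σ⁻¹ * a * σ) * (σ⁻¹ * b * σ) := by group
    show σ⁻¹ * (a * b) * σ ∈ H
    rw [h]
    exact H.mul_mem ha' hb'
  inv_mem' := fun {a} ha => by
    have ha' : σ⁻¹ * a * σ ∈ H := ha
    have h : σ⁻¹ * a⁻¹ * σ = (σ⁻¹ * a * σ)⁻¹ := by group
    show σ⁻¹ * a⁻¹ * σ ∈ H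
    rw [h]
    exact H.inv_mem ha'

lemma mem_conjSub {σ γ : Equiv.Perm Ω} {H : Subgroup (Equiv.Perm Ω)} :
    γ ∈ conjSub σ H ↔ σ⁻¹ * γ * σ ∈ H := Iff.rfl

lemma conj_mem_conjSub {σ h : Equiv.Perm Ω} {H : Subgroup (Equiv.Perm Ω)} (hh : h ∈ H) :
    σ * h * σ⁻¹ ∈ conjSub σ H := by
  rw [mem_conjSub]
  have : σ⁻¹ * (σ * h * σ⁻¹) * σ = h := by group
  rwa [this]

lemma conjSub_le {σ : Equiv.Perm Ω} {G H : Subgroup (Equiv.Perm Ω)} (hσ : σ ∈ G) (hH : H ≤ G) :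
    conjSub σ H ≤ G := by
  intro γ hγ
  have h : γ = σ * (σ⁻¹ * γ * σ) * σ⁻¹ := by group
  rw [h]
  exact mul_mem (mul_mem hσ (hH hγ)) (inv_mem hσ)

lemma conj_apply (σ γ : Equiv.Perm Ω) (x : Ω) : (σ * γ * σ⁻¹) x = σ (γ (σ⁻¹ x)) := by
  simp [Equiv.Perm.mul_apply]

lemma supp_conjSub (σ : Equiv.Perm Ω) (H : Subgroup (Equiv.Perm Ω)) :
    Supp (conjSub σ H) = ⇑σ '' Supp H := by
  ext x
  constructor
  · rintro ⟨γ, hγ, hmove⟩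
    refine ⟨σ⁻¹ x, ⟨σ⁻¹ * γ * σ, hγ, ?_⟩, by simp⟩
    intro h
    apply hmove
    have : γ = σ * (σ⁻¹ * γ * σ) * σ⁻¹ := by group
    rw [this, conj_apply, h]
    simp
  · rintro ⟨z, ⟨γ₀, hγ₀, hmove⟩, rfl⟩
    refine ⟨σ * γ₀ * σ⁻¹, conj_mem_conjSub hγ₀, ?_⟩
    rw [conj_apply]
    simp only [← Equiv.Perm.mul_apply, inv_mul_cancel, Equiv.Perm.one_apply]
    exact fun h => hmove (σ.injective h)

lemma transOn_conjSub {σ : Equiv.Perm Ω} {H : Subgroup (Equiv.Perm Ω)} {S : Set Ω}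
    (ht : TransOn H S) : TransOn (conjSub σ H) (⇑σ '' S) := by
  rintro x ⟨a, ha, rfl⟩ y ⟨b, hb, rfl⟩
  obtain ⟨γ, hγ, hab⟩ := ht a ha b hb
  refine ⟨σ * γ * σ⁻¹, conj_mem_conjSub hγ, ?_⟩
  rw [conj_apply]
  simp [hab]

lemma primOn_conjSub {σ : Equiv.Perm Ω} {H : Subgroup (Equiv.Perm Ω)} {S : Set Ω}
    (hp : PrimOn H S) : PrimOn (conjSub σ H) (⇑σ '' S) := by
  intro B hBsub hB
  set C : Set Ω := ⇑σ⁻¹ '' B with hC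
  have hCS : C ⊆ S := by
    intro z hz
    obtain ⟨b, hb, rfl⟩ := hz
    obtain ⟨a, ha, hab⟩ := hBsub hb
    rw [← hab]
    simpa using ha
  have hB' : B = ⇑σ '' C := (image_perm_inv' σ B).symm
  have hres := hp C hCS ?_
  · rcases hres with h | h
    · left
      rw [hB']
      exact h.image _
    · right
      rw [hB', h]
  · intro γ hγ
    have hmem : σ * γ * σ⁻¹ ∈ conjSub σ H := conj_mem_conjSub hγ
    have himg : ⇑(σ * γ * σ⁻¹) '' B = ⇑σ '' (⇑γ '' C) := by
      ext y
      simp only [Set.mem_image, hC]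
      constructor
      · rintro ⟨b, hb, rfl⟩
        exact ⟨γ (σ⁻¹ b), ⟨σ⁻¹ b, ⟨b, hb, rfl⟩, rfl⟩, (conj_apply σ γ b).symm ▸ rfl⟩
      · rintro ⟨c, ⟨z, ⟨b, hb, rfl⟩, rfl⟩, rfl⟩
        exact ⟨b, hb, conj_apply σ γ b⟩
    rcases hB (σ * γ * σ⁻¹) hmem with h | h
    · left
      rw [himg, hB'] at h
      have := congrArg (fun T => ⇑σ⁻¹ '' T) h
      simpa [image_perm_inv] using this
    · right
      rw [himg, hB'] at h
      rw [Set.disjoint_image_iff σ.injective] at h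
      exact h

/-- Permutations fixing every point outside `T` form a subgroup. -/
def fixOutside (T : Set Ω) : Subgroup (Equiv.Perm Ω) where
  carrier := {π | ∀ x, x ∉ T → π x = x}
  one_mem' := fun _ _ => rfl
  mul_mem' := fun {a b} ha hb x hx => by
    show a (b x) = x
    rw [hb x hx, ha x hx]
  inv_mem' := fun {a} ha x hx => by
    show a⁻¹ x = x
    conv_lhs => rw [← ha x hx]
    simp

/-- quasi-block property for a subgroup. -/
def QB (K : Subgroup (Equiv.Perm Ω)) (B : Set Ω) : Prop :=
  ∀ κ ∈ K, ⇑κ '' B = B ∨ Disjoint (⇑κ '' B) B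

lemma absorb {K H : Subgroup (Equiv.Perm Ω)} (hle : H ≤ K) (hp : PrimOn H (Supp H))
    {B : Set Ω} (hB : QB K B) (hns : ¬ (B ∩ Supp H).Subsingleton) : Supp H ⊆ B := by
  have hq : ∀ γ ∈ H, ⇑γ '' (B ∩ Supp H) = B ∩ Supp H ∨
      Disjoint (⇑γ '' (B ∩ Supp H)) (B ∩ Supp H) := by
    intro γ hγ
    rcases hB γ (hle hγ) with h | h
    · left
      rw [Set.image_inter γ.injective, h, image_supp hγ]
    · right
      exact h.mono (Set.image_mono Set.inter_subset_left) Set.inter_subset_left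
  rcases hp (B ∩ Supp H) Set.inter_subset_right hq with h | h
  · exact absurd h hns
  · rw [← h]
    exact Set.inter_subset_left

lemma kill {K H : Subgroup (Equiv.Perm Ω)} (hle : H ≤ K) (ht : TransOn H (Supp H))
    {B : Set Ω} (hB : QB K B) (hsing : (B ∩ Supp H).Subsingleton)
    {z w : Ω} (hzB : z ∈ B) (hz : z ∉ Supp H) (hwB : w ∈ B) (hw : w ∈ Supp H) : False := by
  obtain ⟨w', hw', hne⟩ := supp_second hw
  obtain ⟨γ, hγ, hγw⟩ := ht w hw w' hw'
  have hγz : γ z = z := fix_of_not_mem_supp hγ hz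
  have heq : ⇑γ '' B = B :=
    (hB γ (hle hγ)).resolve_right fun h => Set.disjoint_left.mp h ⟨z, hzB, hγz⟩ hzB
  have hmem : γ w ∈ B := heq ▸ Set.mem_image_of_mem _ hwB
  rw [hγw] at hmem
  exact hne (hsing ⟨hmem, hw'⟩ ⟨hwB, hw⟩)

lemma side {K H₁ H₂ : Subgroup (Equiv.Perm Ω)} (hle₁ : H₁ ≤ K) (hle₂ : H₂ ≤ K)
    (ht₂ : TransOn H₂ (Supp H₂)) (hp₁ : PrimOn H₁ (Supp H₁)) (hp₂ : PrimOn H₂ (Supp H₂))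
    {c : Ω} (hc₁ : c ∈ Supp H₁) (hc₂ : c ∈ Supp H₂)
    {B : Set Ω} (hBsub : B ⊆ Supp H₁ ∪ Supp H₂) (hB : QB K B)
    (h1 : ¬ (B ∩ Supp H₁).Subsingleton) : B = Supp H₁ ∪ Supp H₂ := by
  have hS1B : Supp H₁ ⊆ B := absorb hle₁ hp₁ hB h1
  by_cases h2 : (B ∩ Supp H₂).Subsingleton
  · exfalso
    by_cases hsub : Supp H₁ ⊆ Supp H₂
    · exact h1 fun a ha b hb => h2 ⟨ha.1, hsub ha.2⟩ ⟨hb.1, hsub hb.2⟩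
    · obtain ⟨d, hd₁, hd₂⟩ := Set.not_subset.mp hsub
      exact kill hle₂ ht₂ hB h2 (hS1B hd₁) hd₂ (hS1B hc₁) hc₂
  · have hS2B : Supp H₂ ⊆ B := absorb hle₂ hp₂ hB h2
    exact Set.Subset.antisymm hBsub (Set.union_subset hS1B hS2B)

lemma join_lemma {H₁ H₂ : Subgroup (Equiv.Perm Ω)}
    (ht₁ : TransOn H₁ (Supp H₁)) (hp₁ : PrimOn H₁ (Supp H₁))
    (ht₂ : TransOn H₂ (Supp H₂)) (hp₂ : PrimOn H₂ (Supp H₂))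
    (hint : (Supp H₁ ∩ Supp H₂).Nonempty) :
    Supp (H₁ ⊔ H₂) = Supp H₁ ∪ Supp H₂ ∧
      TransOn (H₁ ⊔ H₂) (Supp H₁ ∪ Supp H₂) ∧
      PrimOn (H₁ ⊔ H₂) (Supp H₁ ∪ Supp H₂) := by
  obtain ⟨c, hc₁, hc₂⟩ := hint
  have hle₁ : H₁ ≤ H₁ ⊔ H₂ := le_sup_left
  have hle₂ : H₂ ≤ H₁ ⊔ H₂ := le_sup_right
  have hsupp : Supp (H₁ ⊔ H₂) = Supp H₁ ∪ Supp H₂ := by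
    apply Set.Subset.antisymm
    · have hfix : H₁ ⊔ H₂ ≤ fixOutside (Supp H₁ ∪ Supp H₂) := by
        apply sup_le
        · intro γ hγ x hx
          exact fix_of_not_mem_supp hγ fun h => hx (Or.inl h)
        · intro γ hγ x hx
          exact fix_of_not_mem_supp hγ fun h => hx (Or.inr h)
      rintro x ⟨γ, hγ, hmove⟩
      by_contra hx
      exact hmove (hfix hγ x hx)
    · rintro x (hx | hx)
      · obtain ⟨γ, hγ, h⟩ := hx
        exact ⟨γ, hle₁ hγ, h⟩
      · obtain ⟨γ, hγ, h⟩ := hx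
        exact ⟨γ, hle₂ hγ, h⟩
  refine ⟨hsupp, ?_, ?_⟩
  · have reach : ∀ x ∈ Supp H₁ ∪ Supp H₂, ∃ κ ∈ H₁ ⊔ H₂, κ x = c := by
      rintro x (hx | hx)
      · obtain ⟨γ, hγ, h⟩ := ht₁ x hx c hc₁
        exact ⟨γ, hle₁ hγ, h⟩
      · obtain ⟨γ, hγ, h⟩ := ht₂ x hx c hc₂
        exact ⟨γ, hle₂ hγ, h⟩
    intro x hx y hy
    obtain ⟨κ₁, hκ₁, h₁⟩ := reach x hx
    obtain ⟨κ₂, hκ₂, h₂⟩ := reach y hy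
    refine ⟨κ₂⁻¹ * κ₁, mul_mem (inv_mem hκ₂) hκ₁, ?_⟩
    have hy' : κ₂⁻¹ c = y := by rw [← h₂]; simp
    rw [Equiv.Perm.mul_apply, h₁, hy']
  · intro B hBsub hB
    by_cases hBs : B.Subsingleton
    · exact Or.inl hBs
    right
    rw [Set.not_subsingleton_iff] at hBs
    obtain ⟨u, hu, v, hv, huv⟩ := hBs
    by_cases h1 : (B ∩ Supp H₁).Subsingleton
    · by_cases h2 : (B ∩ Supp H₂).Subsingleton
      · exfalso
        by_cases hu1 : u ∈ Supp H₁
        · by_cases hv1 : v ∈ Supp H₁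
          · exact huv (h1 ⟨hu, hu1⟩ ⟨hv, hv1⟩)
          · exact kill hle₁ ht₁ hB h1 hv hv1 hu hu1
        · have hu2 : u ∈ Supp H₂ := (hBsub hu).resolve_left hu1
          by_cases hv2 : v ∈ Supp H₂
          · exact huv (h2 ⟨hu, hu2⟩ ⟨hv, hv2⟩)
          · exact kill hle₂ ht₂ hB h2 hv hv2 hu hu2
      · rw [Set.union_comm]
        refine side hle₂ hle₁ ht₁ hp₂ hp₁ hc₂ hc₁ ?_ hB h2
        rwa [Set.union_comm]
    · exact side hle₁ hle₂ ht₂ hp₁ hp₂ hc₁ hc₂ hBsub hB h1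

/-- pointwise stabilizer of `A` within `G`. -/
def stabA (G : Subgroup (Equiv.Perm Ω)) (A : Set Ω) : Subgroup (Equiv.Perm Ω) :=
  G ⊓ fixOutside Aᶜ

lemma mem_stabA {G : Subgroup (Equiv.Perm Ω)} {A : Set Ω} {g : Equiv.Perm Ω} :
    g ∈ stabA G A ↔ g ∈ G ∧ ∀ z ∈ A, g z = z := by
  rw [stabA, Subgroup.mem_inf]
  constructor
  · rintro ⟨h1, h2⟩
    exact ⟨h1, fun z hz => h2 z (by simpa using hz)⟩
  · rintro ⟨h1, h2⟩
    exact ⟨h1, fun z hz => h2 z (by simpa using hz)⟩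

lemma stabA_le (G : Subgroup (Equiv.Perm Ω)) (A : Set Ω) : stabA G A ≤ G := inf_le_left

/-- `G` "is primitive on `Aᶜ` relative to fixing `A` pointwise". -/
def GoodOn (G : Subgroup (Equiv.Perm Ω)) (A : Set Ω) : Prop :=
  TransOn (stabA G A) Aᶜ ∧ PrimOn (stabA G A) Aᶜ

lemma transOn_mono {H K : Subgroup (Equiv.Perm Ω)} {S : Set Ω} (h : H ≤ K)
    (ht : TransOn H S) : TransOn K S := by
  intro x hx y hy
  obtain ⟨γ, hγ, hh⟩ := ht x hx y hy
  exact ⟨γ, h hγ, hh⟩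

lemma primOn_anti {H K : Subgroup (Equiv.Perm Ω)} {S : Set Ω} (h : H ≤ K)
    (hp : PrimOn H S) : PrimOn K S := by
  intro B hB hq
  exact hp B hB fun γ hγ => hq γ (h hγ)

lemma fix_inv {A : Set Ω} {m : Equiv.Perm Ω} (hm : ∀ z ∈ A, m z = z) :
    ∀ z ∈ A, m⁻¹ z = z := by
  intro z hz
  have : m (m⁻¹ z) = m z := by rw [hm z hz]; simp
  exact m.injective this

lemma image_fix {A : Set Ω} {m : Equiv.Perm Ω} (hm : ∀ z ∈ A, m z = z) : ⇑m '' A = A := by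
  ext x
  constructor
  · rintro ⟨a, ha, rfl⟩
    rwa [hm a ha]
  · intro hx
    exact ⟨x, hx, hm x hx⟩

lemma image_compl_fix {A : Set Ω} {m : Equiv.Perm Ω} (hm : ∀ z ∈ A, m z = z) :
    ⇑m '' Aᶜ = Aᶜ := by
  rw [Set.image_compl_eq m.bijective, image_fix hm]

lemma mem_compl_fix {A : Set Ω} {m : Equiv.Perm Ω} (hm : ∀ z ∈ A, m z = z) {x : Ω}
    (hx : x ∈ Aᶜ) : m x ∈ Aᶜ := by
  rw [← image_compl_fix hm]
  exact Set.mem_image_of_mem _ hx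

lemma compl_insert' (a : Ω) (A : Set Ω) : (insert a A)ᶜ = Aᶜ \ {a} := by
  ext x
  simp [Set.mem_insert_iff, not_or, and_comm]

lemma goodOn_transport {G : Subgroup (Equiv.Perm Ω)} {A : Set Ω} {a b : Ω}
    (hA : GoodOn G A) (hGa : GoodOn G (insert a A)) (ha : a ∈ Aᶜ) (hb : b ∈ Aᶜ) :
    GoodOn G (insert b A) := by
  obtain ⟨m, hmS, hmab⟩ := hA.1 a ha b hb
  obtain ⟨hmG, hmA⟩ := mem_stabA.mp hmS
  have hminv : m⁻¹ b = a := by rw [← hmab]; simp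
  have himg : ⇑m '' (insert a A)ᶜ = (insert b A)ᶜ := by
    rw [compl_insert', compl_insert', Set.image_diff m.injective,
      Set.image_singleton, hmab, image_compl_fix hmA]
  have hle : conjSub m (stabA G (insert a A)) ≤ stabA G (insert b A) := by
    intro γ hγ
    have hγ' : m⁻¹ * γ * m ∈ stabA G (insert a A) := hγ
    obtain ⟨hγG, hγA⟩ := mem_stabA.mp hγ'
    rw [mem_stabA]
    constructor
    · exact conjSub_le hmG (stabA_le G (insert a A)) hγ
    · intro z hz
      have hform : γ = m * (m⁻¹ * γ * m) * m⁻¹ := by group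
      rcases hz with rfl | hz
      · rw [hform, conj_apply, hminv, hγA a (Set.mem_insert a A), hmab]
      · rw [hform, conj_apply, fix_inv hmA z hz,
          hγA z (Set.mem_insert_of_mem a hz), hmA z hz]
  constructor
  · rw [← himg]
    exact transOn_mono hle (transOn_conjSub hGa.1)
  · rw [← himg]
    exact primOn_anti hle (primOn_conjSub hGa.2)

lemma le_stabA_of_supp {G H : Subgroup (Equiv.Perm Ω)} {A : Set Ω} (hHG : H ≤ G)
    (hHA : Supp H ⊆ Aᶜ) : H ≤ stabA G A := by
  intro γ hγ
  exact mem_stabA.mpr ⟨hHG hγ, fun z hz => fix_of_not_mem_supp hγ fun hzS => (hHA hzS) hz⟩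

lemma step (G : Subgroup (Equiv.Perm Ω)) (A : Set Ω) :
    ∀ (k : ℕ) (H : Subgroup (Equiv.Perm Ω)), H ≤ G → Supp H ⊆ Aᶜ →
      TransOn H (Supp H) → PrimOn H (Supp H) → (Supp H).Nonempty → Supp H ≠ Aᶜ →
      (Aᶜ \ Supp H).ncard = k → GoodOn G A →
      ∀ b ∈ Aᶜ, GoodOn G (insert b A) := by
  intro k
  induction k using Nat.strong_induction_on with
  | _ k IH =>
  intro H hHG hHA ht hp hne hneq hk hA b hb
  by_cases hex : ∃ g ∈ G, (∀ z ∈ A, g z = z) ∧ (Supp H ∩ ⇑g '' Supp H).Nonempty ∧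
      Supp H ∪ ⇑g '' Supp H ≠ Supp H ∧ Supp H ∪ ⇑g '' Supp H ≠ Aᶜ
  · obtain ⟨g, hgG, hgA, hint, hne1, hne2⟩ := hex
    have hS₂ : Supp (conjSub g H) = ⇑g '' Supp H := supp_conjSub g H
    have ht₂ : TransOn (conjSub g H) (Supp (conjSub g H)) := by
      rw [hS₂]; exact transOn_conjSub ht
    have hp₂ : PrimOn (conjSub g H) (Supp (conjSub g H)) := by
      rw [hS₂]; exact primOn_conjSub hp
    have hint' : (Supp H ∩ Supp (conjSub g H)).Nonempty := by rw [hS₂]; exact hint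
    obtain ⟨hsupK, htK, hpK⟩ := join_lemma ht hp ht₂ hp₂ hint'
    rw [hS₂] at hsupK htK hpK
    have hKG : H ⊔ conjSub g H ≤ G := sup_le hHG (conjSub_le hgG hHG)
    have hKA : Supp (H ⊔ conjSub g H) ⊆ Aᶜ := by
      rw [hsupK]
      rintro x (hx | hx)
      · exact hHA hx
      · obtain ⟨z, hz, rfl⟩ := hx
        exact mem_compl_fix hgA (hHA hz)
    have htK' : TransOn (H ⊔ conjSub g H) (Supp (H ⊔ conjSub g H)) := by
      rw [hsupK]; exact htK
    have hpK' : PrimOn (H ⊔ conjSub g H) (Supp (H ⊔ conjSub g H)) := by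
      rw [hsupK]; exact hpK
    have hneK : (Supp (H ⊔ conjSub g H)).Nonempty := by
      rw [hsupK]; exact hne.mono Set.subset_union_left
    have hneqK : Supp (H ⊔ conjSub g H) ≠ Aᶜ := by rw [hsupK]; exact hne2
    obtain ⟨t, ht2, ht1⟩ : ∃ t ∈ ⇑g '' Supp H, t ∉ Supp H := by
      by_contra hcon
      push_neg at hcon
      exact hne1 (Set.union_eq_self_of_subset_right hcon)
    have htA : t ∈ Aᶜ := by
      obtain ⟨z, hz, rfl⟩ := ht2
      exact mem_compl_fix hgA (hHA hz)
    have hlt : (Aᶜ \ Supp (H ⊔ conjSub g H)).ncard < k := by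
      rw [← hk]
      apply Set.ncard_lt_ncard _ (Set.toFinite _)
      rw [Set.ssubset_iff_subset_ne]
      constructor
      · intro x hx
        exact ⟨hx.1, fun hxS => hx.2 (by rw [hsupK]; exact Or.inl hxS)⟩
      · intro heq
        have h1 : t ∈ Aᶜ \ Supp H := ⟨htA, ht1⟩
        rw [← heq] at h1
        exact h1.2 (by rw [hsupK]; exact Or.inr ht2)
    exact IH _ hlt (H ⊔ conjSub g H) hKG hKA htK' hpK' hneK hneqK rfl hA b hb
  · push_neg at hex
    obtain ⟨s₀, hs₀⟩ := hne
    obtain ⟨s₁, hs₁, hs01⟩ := supp_second hs₀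
    set S := Supp H with hSdef
    set p := S.ncard with hpdef
    set w := (Aᶜ : Set Ω).ncard with hwdef
    have hSsub : S ⊆ Aᶜ := hHA
    have hpw : p ≤ w := Set.ncard_le_ncard hSsub (Set.toFinite _)
    have hnsub : ¬ (Aᶜ : Set Ω) ⊆ S := fun h => hneq (Set.Subset.antisymm hSsub h)
    have hdiffne : ((Aᶜ : Set Ω) \ S).Nonempty := Set.diff_nonempty.mpr hnsub
    have key : ∀ g ∈ stabA G A, (⇑g '' S ∩ S).Nonempty → ¬(S ∪ ⇑g '' S = Aᶜ) →
        ⇑g '' S = S := by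
      intro g hg hnonem hnotall
      obtain ⟨hgG, hgA⟩ := mem_stabA.mp hg
      have h3 := hex g hgG hgA (by rwa [Set.inter_comm] at hnonem)
      by_cases hU : S ∪ ⇑g '' S = S
      · apply Set.eq_of_subset_of_ncard_le _ _ (Set.toFinite _)
        · intro x hx
          rw [← hU]
          exact Or.inr hx
        · rw [Set.ncard_image_of_injective _ g.injective]
      · exact absurd (h3 hU) hnotall
    rcases le_or_gt (2 * p) w with hle | hgt
    · exfalso
      have hq : ∀ γ ∈ stabA G A, ⇑γ '' S = S ∨ Disjoint (⇑γ '' S) S := by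
        intro g hg
        by_cases hd : Disjoint (⇑g '' S) S
        · exact Or.inr hd
        left
        rw [Set.not_disjoint_iff_nonempty_inter] at hd
        apply key g hg hd
        intro hall
        have h1 : (S ∪ ⇑g '' S).ncard + (S ∩ ⇑g '' S).ncard = S.ncard + (⇑g '' S).ncard :=
          Set.ncard_union_add_ncard_inter _ _ (Set.toFinite _) (Set.toFinite _)
        have h2 : (S ∩ ⇑g '' S).Nonempty := by rwa [Set.inter_comm] at hd
        have h3 : 1 ≤ (S ∩ ⇑g '' S).ncard := by
          rw [Nat.one_le_iff_ne_zero]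
          intro h0
          rw [Set.ncard_eq_zero (Set.toFinite _)] at h0
          exact h2.ne_empty h0
        rw [Set.ncard_image_of_injective _ g.injective, hall] at h1
        omega
      rcases hA.2 S hSsub hq with hsing | heq
      · exact hs01 (hsing hs₁ hs₀)
      · exact hneq heq
    · have hq : ∀ γ ∈ stabA G A,
          ⇑γ '' (Aᶜ \ S) = Aᶜ \ S ∨ Disjoint (⇑γ '' (Aᶜ \ S)) (Aᶜ \ S) := by
        intro g hg
        obtain ⟨hgG, hgA⟩ := mem_stabA.mp hg
        have himg : ⇑g '' (Aᶜ \ S) = Aᶜ \ ⇑g '' S := by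
          rw [Set.image_diff g.injective, image_compl_fix hgA]
        by_cases hd : Disjoint (⇑g '' (Aᶜ \ S)) (Aᶜ \ S)
        · exact Or.inr hd
        left
        rw [Set.not_disjoint_iff_nonempty_inter] at hd
        obtain ⟨t, ht1, ht2⟩ := hd
        rw [himg] at ht1
        have hnotall : ¬(S ∪ ⇑g '' S = Aᶜ) := by
          intro hall
          have ht3 : t ∈ Aᶜ := ht2.1
          rw [← hall] at ht3
          rcases ht3 with h | h
          · exact ht2.2 h
          · exact ht1.2 h
        have hinter : (⇑g '' S ∩ S).Nonempty := by
          rw [← Set.not_disjoint_iff_nonempty_inter]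
          intro hdisj
          have hcard : (S ∪ ⇑g '' S).ncard = p + p := by
            rw [Set.ncard_union_eq hdisj.symm (Set.toFinite _) (Set.toFinite _),
              Set.ncard_image_of_injective _ g.injective]
          have hsub2 : S ∪ ⇑g '' S ⊆ Aᶜ := by
            rintro x (hx | hx)
            · exact hSsub hx
            · obtain ⟨z, hz, rfl⟩ := hx
              exact mem_compl_fix hgA (hSsub hz)
          have hle2 := Set.ncard_le_ncard hsub2 (Set.toFinite _)
          omega
        have hgS := key g hg hinter hnotall
        rw [himg, hgS]
      rcases hA.2 (Aᶜ \ S) Set.diff_subset hq with hsing | heq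
      · obtain ⟨a, ha⟩ := hdiffne
        have hFa : (Aᶜ : Set Ω) \ S = {a} := by
          apply Set.Subset.antisymm
          · intro x hx
            exact hsing hx ha
          · intro x hx
            rw [Set.mem_singleton_iff] at hx
            subst hx
            exact ha
        have hW' : (insert a A)ᶜ = S := by
          rw [compl_insert', ← hFa, Set.diff_diff_cancel_left hSsub]
        have hHle : H ≤ stabA G (insert a A) := le_stabA_of_supp hHG (by rw [hW'])
        have hGa : GoodOn G (insert a A) := by
          constructor
          · rw [hW']
            exact transOn_mono hHle ht
          · rw [hW']
            exact primOn_anti hHle hp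
        exact goodOn_transport hA hGa ha.1 hb
      · exfalso
        have hmem : s₀ ∈ (Aᶜ : Set Ω) \ S := by
          rw [heq]
          exact hSsub hs₀
        exact hmem.2 hs₀

lemma multi (G : Subgroup (Equiv.Perm Ω)) :
    ∀ (q : ℕ) (A : Set Ω), GoodOn G A →
      ∀ (H : Subgroup (Equiv.Perm Ω)), H ≤ G → Supp H ⊆ Aᶜ →
      TransOn H (Supp H) → PrimOn H (Supp H) → (Aᶜ \ Supp H).ncard = q →
      ∀ x y : Fin (q + 1) → Ω, Function.Injective x → Function.Injective y →
        (∀ i, x i ∈ Aᶜ) → (∀ i, y i ∈ Aᶜ) →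
        ∃ g ∈ G, (∀ z ∈ A, g z = z) ∧ ∀ i, g (x i) = y i := by
  intro q
  induction q with
  | zero =>
    intro A hA H _ _ _ _ _ x y _ _ hx hy
    obtain ⟨g, hg, hgxy⟩ := hA.1 (x 0) (hx 0) (y 0) (hy 0)
    obtain ⟨hgG, hgA⟩ := mem_stabA.mp hg
    refine ⟨g, hgG, hgA, fun i => ?_⟩
    have hi : i = 0 := by
      have := i.isLt
      exact Fin.ext (by omega)
    rw [hi, hgxy]
  | succ q IH =>
    intro A hA H hHG hHA ht hp hq x y hxinj hyinj hx hy
    by_cases hSne : (Supp H).Nonempty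
    case neg =>
      exfalso
      rw [Set.not_nonempty_iff_eq_empty] at hSne
      rw [hSne, Set.diff_empty] at hq
      have hr : (Set.range x).ncard = q + 2 := by
        rw [← Set.image_univ, Set.ncard_image_of_injective _ hxinj, Set.ncard_univ,
          Nat.card_eq_fintype_card, Fintype.card_fin]
      have hsub : Set.range x ⊆ Aᶜ := by
        rintro _ ⟨i, rfl⟩
        exact hx i
      have hcon := Set.ncard_le_ncard hsub (Set.toFinite _)
      omega
    case pos =>
      have hSneq : Supp H ≠ Aᶜ := by
        intro h
        rw [h, Set.diff_self] at hq
        simp at hq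
      obtain ⟨z, hz⟩ : ((Aᶜ : Set Ω) \ Supp H).Nonempty :=
        Set.nonempty_of_ncard_ne_zero (by omega)
      obtain ⟨m, hmS, hmz⟩ := hA.1 z hz.1 (y 0) (hy 0)
      obtain ⟨hmG, hmA⟩ := mem_stabA.mp hmS
      have hS₁ : Supp (conjSub m H) = ⇑m '' Supp H := supp_conjSub m H
      have hH₁G : conjSub m H ≤ G := conjSub_le hmG hHG
      have hH₁A : Supp (conjSub m H) ⊆ Aᶜ := by
        rw [hS₁]
        rintro _ ⟨u, hu, rfl⟩
        exact mem_compl_fix hmA (hHA hu)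
      have ht₁ : TransOn (conjSub m H) (Supp (conjSub m H)) := by
        rw [hS₁]; exact transOn_conjSub ht
      have hp₁ : PrimOn (conjSub m H) (Supp (conjSub m H)) := by
        rw [hS₁]; exact primOn_conjSub hp
      have hy₀ : y 0 ∉ Supp (conjSub m H) := by
        rw [hS₁]
        rintro ⟨u, hu, hmu⟩
        have hu' : u = z := m.injective (by rw [hmu, hmz])
        rw [hu'] at hu
        exact hz.2 hu
      have hcard₁ : ((Aᶜ : Set Ω) \ Supp (conjSub m H)).ncard = q + 1 := by
        have e1 : ((Aᶜ : Set Ω) \ Supp H).ncard = (Aᶜ : Set Ω).ncard - (Supp H).ncard :=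
          Set.ncard_diff hHA (Set.toFinite _)
        have e2 : ((Aᶜ : Set Ω) \ Supp (conjSub m H)).ncard
            = (Aᶜ : Set Ω).ncard - (Supp (conjSub m H)).ncard :=
          Set.ncard_diff hH₁A (Set.toFinite _)
        rw [e2, hS₁, Set.ncard_image_of_injective _ m.injective, ← e1, hq]
      have hS₁ne : (Supp (conjSub m H)).Nonempty := by
        rw [hS₁]
        exact hSne.image _
      have hS₁neq : Supp (conjSub m H) ≠ Aᶜ := by
        intro h
        rw [h, Set.diff_self] at hcard₁
        simp at hcard₁
      have hGa : GoodOn G (insert (y 0) A) :=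
        step G A _ (conjSub m H) hH₁G hH₁A ht₁ hp₁ hS₁ne hS₁neq rfl hA (y 0) (hy 0)
      obtain ⟨g₀, hg₀S, hg₀⟩ := hA.1 (x 0) (hx 0) (y 0) (hy 0)
      obtain ⟨hg₀G, hg₀A⟩ := mem_stabA.mp hg₀S
      have hx'inj : Function.Injective (fun i : Fin (q+1) => g₀ (x i.succ)) := by
        intro i j hij
        exact Fin.succ_injective _ (hxinj (g₀.injective hij))
      have hy'inj : Function.Injective (fun i : Fin (q+1) => y i.succ) :=
        fun i j hij => Fin.succ_injective _ (hyinj hij)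
      have hsuppA' : Supp (conjSub m H) ⊆ (insert (y 0) A)ᶜ := by
        rw [compl_insert']
        intro u hu
        refine ⟨hH₁A hu, fun h => ?_⟩
        rw [Set.mem_singleton_iff] at h
        rw [h] at hu
        exact hy₀ hu
      have hymem : y 0 ∈ (Aᶜ : Set Ω) \ Supp (conjSub m H) := ⟨hy 0, hy₀⟩
      have hcard' : (((insert (y 0) A)ᶜ : Set Ω) \ Supp (conjSub m H)).ncard = q := by
        rw [compl_insert', Set.diff_diff_comm,
          Set.ncard_diff_singleton_of_mem hymem, hcard₁]
        omega
      have hx'mem : ∀ i : Fin (q+1), g₀ (x i.succ) ∈ (insert (y 0) A)ᶜ := by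
        intro i
        rw [compl_insert']
        refine ⟨mem_compl_fix hg₀A (hx i.succ), fun h => ?_⟩
        rw [Set.mem_singleton_iff] at h
        have h1 : g₀ (x i.succ) = g₀ (x 0) := by rw [h, hg₀]
        exact (Fin.succ_ne_zero i) (hxinj (g₀.injective h1))
      have hy'mem : ∀ i : Fin (q+1), y i.succ ∈ (insert (y 0) A)ᶜ := by
        intro i
        rw [compl_insert']
        refine ⟨hy i.succ, fun h => ?_⟩
        rw [Set.mem_singleton_iff] at h
        exact (Fin.succ_ne_zero i) (hyinj h)
      obtain ⟨g₁, hg₁G, hg₁A, hg₁⟩ := IH (insert (y 0) A) hGa (conjSub m H) hH₁G hsuppA'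
        ht₁ hp₁ hcard' _ _ hx'inj hy'inj hx'mem hy'mem
      refine ⟨g₁ * g₀, mul_mem hg₁G hg₀G, ?_, ?_⟩
      · intro z' hz'
        rw [Equiv.Perm.mul_apply, hg₀A z' hz', hg₁A z' (Set.mem_insert_of_mem _ hz')]
      · intro i
        rw [Equiv.Perm.mul_apply]
        refine Fin.cases ?_ ?_ i
        · rw [hg₀, hg₁A (y 0) (Set.mem_insert _ _)]
        · intro j
          exact hg₁ j

end JordanAux


open scoped Pointwise

/-- **Jordan's Théorème I (last sentence).** If a primitive group `G` of degree `n` contains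
a subgroup `Γ` whose support is a set `S` of size `p`, and `Γ` acts primitively on `S`
(transitively, preserving no nontrivial partition of `S`), then `G` is
`(n - p + 1)`-transitive. -/
theorem jordan_primitive_subgroup (Ω : Type*) [Fintype Ω] [DecidableEq Ω] (n : ℕ)
    (hn : Fintype.card Ω = n)
    (G : Subgroup (Equiv.Perm Ω)) (hG : IsPreprimitive G Ω)
    (Γ : Subgroup (Equiv.Perm Ω)) (hΓG : Γ ≤ G)
    (S : Set Ω) (p : ℕ) (hScard : S.ncard = p)
    (hsupp : S = {x : Ω | ∃ γ ∈ Γ, γ x ≠ x})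
    (htrans : ∀ x ∈ S, ∀ y ∈ S, ∃ γ ∈ Γ, γ x = y)
    (hprim : ∀ B ⊆ S, (∀ γ ∈ Γ, ⇑γ '' B = B ∨ Disjoint (⇑γ '' B) B) →
      B.Subsingleton ∨ B = S) :
    IsMultiplyPretransitive G Ω (n - p + 1) := by
  classical
  have hS : S = JordanAux.Supp Γ := hsupp
  have hgood : JordanAux.GoodOn G ∅ := by
    constructor
    · intro x _ y _
      obtain ⟨g, hg⟩ := hG.1.exists_smul_eq x y
      exact ⟨(g : Equiv.Perm Ω), JordanAux.mem_stabA.mpr ⟨g.2, by simp⟩, hg⟩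
    · intro B hB hq
      have hblock : MulAction.IsBlock G B := by
        rw [MulAction.isBlock_iff_smul_eq_or_disjoint]
        intro g
        have hg := hq (g : Equiv.Perm Ω) (JordanAux.mem_stabA.mpr ⟨g.2, by simp⟩)
        have himg : (g • B) = ⇑(g : Equiv.Perm Ω) '' B := by
          ext u
          rw [Set.mem_smul_set]
          exact Iff.rfl
        rw [himg]
        exact hg
      rcases hG.2 B hblock with h | h
      · exact Or.inl h
      · right
        rw [h, Set.compl_empty]
  have hcard : ((∅ᶜ : Set Ω) \ JordanAux.Supp Γ).ncard = n - p := by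
    rw [Set.compl_empty, ← hS, ← Set.compl_eq_univ_diff]
    have hd := Set.ncard_diff (Set.subset_univ S) (Set.toFinite _)
    rw [← Set.compl_eq_univ_diff] at hd
    rw [hd, Set.ncard_univ, Nat.card_eq_fintype_card, hn, hScard]
  constructor
  intro f₁ f₂
  obtain ⟨g, hgG, -, hgf⟩ := JordanAux.multi G (n - p) ∅ hgood Γ hΓG
    (by rw [Set.compl_empty]; exact Set.subset_univ _)
    (by rw [← hS]; exact htrans) (by rw [← hS]; exact hprim) hcard
    ⇑f₁ ⇑f₂ f₁.injective f₂.injective (by simp) (by simp)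
  refine ⟨⟨g, hgG⟩, ?_⟩
  ext i
  rw [Function.Embedding.smul_apply]
  exact hgf i
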